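/- arXiv:1602.06560 — 2 statements merged into one kernel-verified Lean document; each statement's English description precedes it below -/
import Mathlib

section
/- Let K be a convex body in ℝ^n and x ∈ F_n(K), i.e., gx = x for every invertible affine map g with gK = K. Then the map f : Aff(n)·K → ℝ^n defined on the orbit of K by f(gK) = gx is well-defined, continuous, and Aff(n)-equivariant. -/
open Metric Set Pointwise
set_option maxHeartbeats 2000000
set_option synthInstance.maxHeartbeats 1000000

noncomputable section

abbrev En (n : ℕ) : Type := EuclideanSpace ℝ (Fin n)

abbrev AffG (n : ℕ) : Type := En n ≃ᵃ[ℝ] En n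

abbrev KBody (n : ℕ) : Type :=
  {K : ConvexBody (En n) // (interior (K : Set (En n))).Nonempty}

instance (n : ℕ) : SMul (AffG n) (KBody n) where
  smul g K :=
    ⟨⟨g '' (K.1 : Set (En n)),
      K.1.convex.affine_image g.toAffineMap,
      K.1.isCompact.image g.continuous_of_finiteDimensional,
      K.1.nonempty.image g⟩,
      by
        obtain ⟨x, hx⟩ := K.2
        refine ⟨g x, ?_⟩
        show g x ∈ interior (⇑g '' (K.1 : Set (En n)))
        rw [← g.coe_toHomeomorphOfFiniteDimensional,
          ← Homeomorph.image_interior]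
        exact ⟨x, hx, rfl⟩⟩

theorem smul_body_coe {n : ℕ} (g : AffG n) (K : KBody n) :
    ((g • K : KBody n).1 : Set (En n)) = g '' (K.1 : Set (En n)) := rfl

instance (n : ℕ) : MulAction (AffG n) (KBody n) where
  one_smul K := by
    apply Subtype.ext; apply ConvexBody.ext
    rw [smul_body_coe]; simp
  mul_smul g h K := by
    apply Subtype.ext; apply ConvexBody.ext
    rw [smul_body_coe, smul_body_coe, smul_body_coe, Set.image_image]
    simp [AffineEquiv.mul_def]

/-- An affine invariant point. -/
def IsAffineInvariantPoint {n : ℕ} (p : KBody n → En n) : Prop :=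
  Continuous p ∧ ∀ (g : AffG n) (K : KBody n), p (g • K) = g (p K)

/-- The set `F_n(K)` of points fixed by every affine symmetry of `K`. -/
def Fn {n : ℕ} (K : KBody n) : Set (En n) :=
  {x | ∀ g : AffG n, g • K = K → g x = x}

/-- The set `P_n(K)` of values of affine invariant points at `K`. -/
def Pn {n : ℕ} (K : KBody n) : Set (En n) :=
  {x | ∃ p : KBody n → En n, IsAffineInvariantPoint p ∧ p K = x}


section Helpers

open Filter MulAction
open scoped RealInnerProductSpace

variable {n : ℕ}

/-- The linear part of an affine equivalence, as a continuous linear map. -/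
noncomputable def Lm (g : AffG n) : En n →L[ℝ] En n :=
  LinearMap.toContinuousLinearMap (g.linear : En n →ₗ[ℝ] En n)

lemma aff_apply (g : AffG n) (y : En n) : g y = Lm g y + g 0 := by
  have h := g.map_vadd 0 y
  simp only [vadd_eq_add, add_zero] at h
  simpa [Lm, add_comm] using h

lemma Lm_apply (g : AffG n) (y : En n) : Lm g y = g.linear y := by
  simp [Lm]

lemma Lm_comp_inv (g : AffG n) : (Lm g).comp (Lm g⁻¹) = ContinuousLinearMap.id ℝ (En n) := by
  ext y
  simp [Lm, AffineEquiv.inv_def, AffineEquiv.linear_symm]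

lemma Lm_inv_comp (g : AffG n) : (Lm g⁻¹).comp (Lm g) = ContinuousLinearMap.id ℝ (En n) := by
  ext y
  simp [Lm, AffineEquiv.inv_def, AffineEquiv.linear_symm]

lemma kdist (A B : KBody n) :
    dist A B = Metric.hausdorffDist (A.1 : Set (En n)) (B.1 : Set (En n)) := by
  rw [Subtype.dist_eq, ← ConvexBody.hausdorffDist_coe]

lemma kedist (A B : KBody n) :
    EMetric.hausdorffEdist (A.1 : Set (En n)) (B.1 : Set (En n)) ≠ ⊤ :=
  Metric.hausdorffEdist_ne_top_of_nonempty_of_bounded A.1.nonempty B.1.nonempty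
    A.1.isCompact.isBounded B.1.isCompact.isBounded

lemma kdist_smul_le (g h : AffG n) (A : KBody n) {c : ℝ} (hc0 : 0 ≤ c)
    (hc : ∀ y ∈ (A.1 : Set (En n)), dist (g y) (h y) ≤ c) :
    dist (g • A) (h • A) ≤ c := by
  rw [kdist, smul_body_coe, smul_body_coe]
  apply Metric.hausdorffDist_le_of_mem_dist hc0
  · rintro _ ⟨y, hy, rfl⟩
    exact ⟨h y, ⟨y, hy, rfl⟩, hc y hy⟩
  · rintro _ ⟨y, hy, rfl⟩
    exact ⟨g y, ⟨y, hy, rfl⟩, by rw [dist_comm]; exact hc y hy⟩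

/-- If every point of `ball p r` is within `δ` of the closed convex set `C`, then
`ball p (r - δ) ⊆ C`. -/
lemma ball_subset_of_near {C : Set (En n)} (hC : Convex ℝ C) (hCl : IsClosed C)
    {p : En n} {r δ : ℝ} (hδ : 0 < δ)
    (h : ∀ a ∈ Metric.ball p r, ∃ z ∈ C, dist a z < δ) :
    Metric.ball p (r - δ) ⊆ C := by
  intro y hy
  by_contra hyC
  have hyp : dist y p < r - δ := Metric.mem_ball.1 hy
  have hrδ : 0 < r - δ := lt_of_le_of_lt dist_nonneg hyp
  have hrpos : 0 < r := by linarith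
  obtain ⟨z₀, hz₀, -⟩ := h p (Metric.mem_ball_self hrpos)
  obtain ⟨w, hwC, hmin⟩ :=
    exists_norm_eq_iInf_of_complete_convex ⟨z₀, hz₀⟩ hCl.isComplete hC y
  have hproj := (norm_eq_iInf_iff_real_inner_le_zero hC hwC).1 hmin
  have hu : y - w ≠ 0 := sub_ne_zero.2 fun e => hyC (e ▸ hwC)
  have hun : 0 < ‖y - w‖ := norm_pos_iff.2 hu
  set y' := y + (δ / ‖y - w‖) • (y - w) with hy'def
  have hy'y : dist y' y = δ := by
    rw [dist_eq_norm]
    have : y' - y = (δ / ‖y - w‖) • (y - w) := by rw [hy'def]; abel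
    rw [this, norm_smul, Real.norm_eq_abs, abs_of_pos (by positivity)]
    field_simp
  have hy'ball : y' ∈ Metric.ball p r := by
    have := dist_triangle y' y p
    rw [Metric.mem_ball]
    rw [hy'y] at this
    linarith
  obtain ⟨z, hzC, hdz⟩ := h y' hy'ball
  have hinner : ‖y - w‖ ^ 2 + δ * ‖y - w‖ ≤ ⟪y' - z, y - w⟫ := by
    have e : y' - z = ((y - w) - (z - w)) + (δ / ‖y - w‖) • (y - w) := by
      rw [hy'def]; abel
    rw [e, inner_add_left, inner_sub_left, real_inner_smul_left,
      real_inner_self_eq_norm_sq]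
    have h1 : ⟪y - w, z - w⟫ ≤ 0 := hproj z hzC
    have h2 : ⟪z - w, y - w⟫ ≤ 0 := by rwa [real_inner_comm]
    have h3 : δ / ‖y - w‖ * ‖y - w‖ ^ 2 = δ * ‖y - w‖ := by
      field_simp
    nlinarith
  have hcs : ⟪y' - z, y - w⟫ ≤ ‖y' - z‖ * ‖y - w‖ := real_inner_le_norm _ _
  have hge : ‖y - w‖ + δ ≤ ‖y' - z‖ := by
    nlinarith
  rw [dist_eq_norm] at hdz
  linarith

lemma opnorm_le_of_ball (f : En n →L[ℝ] En n) {r c : ℝ} (hr : 0 < r) (hc : 0 ≤ c)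
    (h : ∀ z : En n, ‖z‖ < r → ‖f z‖ ≤ c) : ‖f‖ ≤ 2 * c / r := by
  refine f.opNorm_le_bound (by positivity) fun z => ?_
  rcases eq_or_ne z 0 with rfl | hz
  · simp
  · have hzn : 0 < ‖z‖ := norm_pos_iff.2 hz
    have h1 : ‖(r / (2 * ‖z‖)) • z‖ < r := by
      rw [norm_smul, Real.norm_eq_abs, abs_of_pos (by positivity)]
      rw [div_mul_eq_mul_div, mul_comm]
      rw [div_lt_iff₀ (by positivity)]
      nlinarith
    have h2 := h _ h1
    rw [map_smul, norm_smul, Real.norm_eq_abs, abs_of_pos (by positivity)] at h2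
    rw [div_mul_eq_mul_div, div_le_iff₀ (by positivity)] at h2
    rw [div_mul_eq_mul_div, le_div_iff₀ hr]
    nlinarith [norm_nonneg (f z)]

/-- The key continuity lemma: if `vᵢ • K → g₀ • K` then `vᵢ x → g₀ x` for
`x` fixed by the stabilizer of `K`. -/
lemma key_tendsto (K : KBody n) (x : En n)
    (hx : ∀ g : AffG n, g • K = K → g x = x)
    (g₀ : AffG n) (v : ℕ → AffG n)
    (hv : Tendsto (fun i => v i • K) atTop (nhds (g₀ • K))) :
    Tendsto (fun i => v i x) atTop (nhds (g₀ x)) := by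
  classical
  -- a ball inside K and a bound on K
  obtain ⟨q, hqK⟩ := K.2
  obtain ⟨s, hs, hsK'⟩ := Metric.mem_nhds_iff.1 (mem_interior_iff_mem_nhds.1 hqK)
  have hsK : Metric.ball q s ⊆ (K.1 : Set (En n)) := hsK'
  obtain ⟨S₀, hS₀⟩ := K.1.isCompact.isBounded.subset_closedBall 0
  set S := max S₀ 1 with hSdef
  have hSpos : (0:ℝ) < S := lt_of_lt_of_le one_pos (le_max_right _ _)
  have hKS : (K.1 : Set (En n)) ⊆ Metric.closedBall 0 S :=
    hS₀.trans (Metric.closedBall_subset_closedBall (le_max_left _ _))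
  -- a ball inside g₀ • K and a bound on g₀ • K
  obtain ⟨p, hp⟩ := (g₀ • K).2
  obtain ⟨r, hr, hrA'⟩ := Metric.mem_nhds_iff.1 (mem_interior_iff_mem_nhds.1 hp)
  have hrA : Metric.ball p r ⊆ (((g₀ • K) : KBody n).1 : Set (En n)) :=
    hrA'
  obtain ⟨R₀, hR₀⟩ := ((g₀ • K) : KBody n).1.isCompact.isBounded.subset_closedBall 0
  set R := max R₀ 1 with hRdef
  have hRpos : (0:ℝ) < R := lt_of_lt_of_le one_pos (le_max_right _ _)
  have hAR : (((g₀ • K) : KBody n).1 : Set (En n)) ⊆ Metric.closedBall 0 R :=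
    hR₀.trans (Metric.closedBall_subset_closedBall (le_max_left _ _))
  -- eventual closeness
  set ε := min (r/4) 1 with hεdef
  have hεpos : 0 < ε := lt_min (by linarith) one_pos
  obtain ⟨N, hN⟩ := (Metric.tendsto_atTop.1 hv) ε hεpos
  -- upper bound on the moved bodies
  have hup : ∀ i, N ≤ i → ∀ y ∈ (((v i • K) : KBody n).1 : Set (En n)), ‖y‖ ≤ R + 1 := by
    intro i hi y hy
    have hd : Metric.hausdorffDist (((v i • K) : KBody n).1 : Set (En n))
        (((g₀ • K) : KBody n).1 : Set (En n)) < 1 := by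
      rw [← kdist]
      exact lt_of_lt_of_le (hN i hi) (min_le_right _ _)
    obtain ⟨z, hz, hz1⟩ := Metric.exists_dist_lt_of_hausdorffDist_lt hy hd (kedist _ _)
    have hzR : ‖z‖ ≤ R := by
      have := hAR hz
      rwa [Metric.mem_closedBall, dist_zero_right] at this
    have : ‖y‖ ≤ ‖z‖ + dist y z := by
      rw [dist_eq_norm]
      calc ‖y‖ = ‖z + (y - z)‖ := by congr 1; abel
        _ ≤ ‖z‖ + ‖y - z‖ := norm_add_le _ _
    linarith
  -- lower bound: a fixed ball inside the moved bodies
  have hlow : ∀ i, N ≤ i → Metric.ball p (r/2) ⊆ (((v i • K) : KBody n).1 : Set (En n)) := by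
    intro i hi
    have hnear : ∀ a ∈ Metric.ball p r,
        ∃ z ∈ (((v i • K) : KBody n).1 : Set (En n)), dist a z < r/4 := by
      intro a ha
      have hd : Metric.hausdorffDist (((g₀ • K) : KBody n).1 : Set (En n))
          (((v i • K) : KBody n).1 : Set (En n)) < r/4 := by
        rw [Metric.hausdorffDist_comm, ← kdist]
        exact lt_of_lt_of_le (hN i hi) (min_le_left _ _)
      exact Metric.exists_dist_lt_of_hausdorffDist_lt (hrA ha) hd (kedist _ _)
    have hsub := ball_subset_of_near (v i • K).1.convex (v i • K).1.isCompact.isClosed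
      (by linarith : (0:ℝ) < r/4) hnear
    exact (Metric.ball_subset_ball (by linarith)).trans hsub
  -- norm bounds on the linear parts, their inverses, and the translations
  set C₁ := 2 * (2 * (R + 1)) / s with hC₁def
  have hC₁pos : 0 ≤ C₁ := by positivity
  have hqS : ‖q‖ ≤ S := by
    have := hKS (hsK (Metric.mem_ball_self hs))
    rwa [Metric.mem_closedBall, dist_zero_right] at this
  have hmemvi : ∀ i (y : En n), y ∈ (K.1 : Set (En n)) →
      v i y ∈ (((v i • K) : KBody n).1 : Set (En n)) := by
    intro i y hy
    rw [smul_body_coe]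
    exact ⟨y, hy, rfl⟩
  have hC₁ : ∀ i, N ≤ i → ‖Lm (v i)‖ ≤ C₁ := by
    intro i hi
    apply opnorm_le_of_ball _ hs (by positivity)
    intro z hz
    have h1 : q + z ∈ Metric.ball q s := by
      rw [Metric.mem_ball, dist_eq_norm, add_sub_cancel_left]
      exact hz
    have h2 := hup i hi _ (hmemvi i _ (hsK h1))
    have h3 := hup i hi _ (hmemvi i _ (hsK (Metric.mem_ball_self hs)))
    have h4 : Lm (v i) z = v i (q + z) - v i q := by
      rw [aff_apply (v i) (q + z), aff_apply (v i) q, map_add]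
      abel
    rw [h4]
    calc ‖v i (q + z) - v i q‖ ≤ ‖v i (q + z)‖ + ‖v i q‖ := norm_sub_le _ _
      _ ≤ 2 * (R + 1) := by linarith
  set C₂ := 2 * (2 * S) / (r/2) with hC₂def
  have hC₂pos : 0 ≤ C₂ := by positivity
  have hC₂ : ∀ i, N ≤ i → ‖Lm (v i)⁻¹‖ ≤ C₂ := by
    intro i hi
    apply opnorm_le_of_ball _ (by linarith : (0:ℝ) < r/2) (by positivity)
    intro w hw
    have h1 : p + w ∈ Metric.ball p (r/2) := by
      rw [Metric.mem_ball, dist_eq_norm, add_sub_cancel_left]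
      exact hw
    have hinvmem : ∀ a : En n, a ∈ (((v i • K) : KBody n).1 : Set (En n)) →
        (v i)⁻¹ a ∈ (K.1 : Set (En n)) := by
      intro a ha
      rw [smul_body_coe] at ha
      obtain ⟨y, hy, rfl⟩ := ha
      rwa [AffineEquiv.inv_def, AffineEquiv.symm_apply_apply]
    have h2 := hinvmem _ (hlow i hi h1)
    have h3 := hinvmem _ (hlow i hi (Metric.mem_ball_self (by linarith)))
    have h2' : ‖(v i)⁻¹ (p + w)‖ ≤ S := by
      have := hKS h2; rwa [Metric.mem_closedBall, dist_zero_right] at this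
    have h3' : ‖(v i)⁻¹ p‖ ≤ S := by
      have := hKS h3; rwa [Metric.mem_closedBall, dist_zero_right] at this
    have h4 : Lm (v i)⁻¹ w = (v i)⁻¹ (p + w) - (v i)⁻¹ p := by
      rw [aff_apply ((v i)⁻¹) (p + w), aff_apply ((v i)⁻¹) p, map_add]
      abel
    rw [h4]
    calc ‖(v i)⁻¹ (p + w) - (v i)⁻¹ p‖ ≤ ‖(v i)⁻¹ (p + w)‖ + ‖(v i)⁻¹ p‖ := norm_sub_le _ _
      _ ≤ 2 * S := by linarith
  set C₃ := (R + 1) + C₁ * S with hC₃def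
  have hC₃ : ∀ i, N ≤ i → ‖v i 0‖ ≤ C₃ := by
    intro i hi
    have h1 : v i 0 = v i q - Lm (v i) q := by
      rw [aff_apply (v i) q]; abel
    have h2 := hup i hi _ (hmemvi i _ (hsK (Metric.mem_ball_self hs)))
    have h3 : ‖Lm (v i) q‖ ≤ C₁ * S := by
      calc ‖Lm (v i) q‖ ≤ ‖Lm (v i)‖ * ‖q‖ := (Lm (v i)).le_opNorm q
        _ ≤ C₁ * S := by
          apply mul_le_mul (hC₁ i hi) hqS (norm_nonneg _) hC₁pos
    rw [h1]
    calc ‖v i q - Lm (v i) q‖ ≤ ‖v i q‖ + ‖Lm (v i) q‖ := norm_sub_le _ _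
      _ ≤ C₃ := by rw [hC₃def]; linarith
  -- the compact set of candidate affine data
  set SS : Set ((En n →L[ℝ] En n) × (En n →L[ℝ] En n) × En n) :=
    (Metric.closedBall 0 C₁ ×ˢ Metric.closedBall 0 C₂ ×ˢ Metric.closedBall 0 C₃) ∩
      {P | P.1.comp P.2.1 = ContinuousLinearMap.id ℝ (En n) ∧
        P.2.1.comp P.1 = ContinuousLinearMap.id ℝ (En n)} with hSSdef
  have hSSc : IsCompact SS := by
    apply IsCompact.inter_right
    · exact (isCompact_closedBall _ _).prod
        ((isCompact_closedBall _ _).prod (isCompact_closedBall _ _))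
    · have hcont1 : Continuous fun P : (En n →L[ℝ] En n) × (En n →L[ℝ] En n) × En n =>
          P.1.comp P.2.1 :=
        isBoundedBilinearMap_comp.continuous.comp
          (continuous_fst.prodMk (continuous_fst.comp continuous_snd))
      have hcont2 : Continuous fun P : (En n →L[ℝ] En n) × (En n →L[ℝ] En n) × En n =>
          P.2.1.comp P.1 :=
        isBoundedBilinearMap_comp.continuous.comp
          ((continuous_fst.comp continuous_snd).prodMk continuous_fst)
      have : {P : (En n →L[ℝ] En n) × (En n →L[ℝ] En n) × En n |
          P.1.comp P.2.1 = ContinuousLinearMap.id ℝ (En n) ∧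
          P.2.1.comp P.1 = ContinuousLinearMap.id ℝ (En n)} =
          {P | P.1.comp P.2.1 = ContinuousLinearMap.id ℝ (En n)} ∩
          {P | P.2.1.comp P.1 = ContinuousLinearMap.id ℝ (En n)} := rfl
      rw [this]
      exact (isClosed_eq hcont1 continuous_const).inter (isClosed_eq hcont2 continuous_const)
  set tup : AffG n → (En n →L[ℝ] En n) × (En n →L[ℝ] En n) × En n :=
    fun g => (Lm g, Lm g⁻¹, g 0) with htupdef
  have htup : ∀ i, N ≤ i → tup (v i) ∈ SS := by
    intro i hi
    refine ⟨⟨?_, ?_, ?_⟩, Lm_comp_inv (v i), Lm_inv_comp (v i)⟩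
    · rw [Metric.mem_closedBall, dist_zero_right]; exact hC₁ i hi
    · rw [Metric.mem_closedBall, dist_zero_right]; exact hC₂ i hi
    · rw [Metric.mem_closedBall, dist_zero_right]; exact hC₃ i hi
  -- prove convergence via subsequences
  apply Filter.tendsto_of_subseq_tendsto
  intro ns hns
  obtain ⟨M, hM⟩ := Filter.eventually_atTop.1 (hns.eventually_ge_atTop N)
  have hmem : ∀ j : ℕ, tup (v (ns (j + M))) ∈ SS :=
    fun j => htup _ (hM _ (Nat.le_add_left M j))
  obtain ⟨P, hPSS, φ, hφ, hφt⟩ := hSSc.tendsto_subseq hmem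
  obtain ⟨T, T', b⟩ := P
  refine ⟨fun j => φ j + M, ?_⟩
  set w : ℕ → AffG n := fun j => v (ns (φ j + M)) with hwdef
  have hφt' : Tendsto (fun j => tup (w j)) atTop (nhds (T, T', b)) := hφt
  have hT : Tendsto (fun j => Lm (w j)) atTop (nhds T) :=
    (continuous_fst.tendsto _).comp hφt'
  have hb : Tendsto (fun j => w j 0) atTop (nhds b) :=
    ((continuous_snd.comp continuous_snd).tendsto _).comp hφt'
  -- build the limit affine equivalence
  have hTT' : T.toLinearMap.comp T'.toLinearMap = LinearMap.id := by
    apply LinearMap.ext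
    intro y
    simpa using DFunLike.congr_fun hPSS.2.1 y
  have hT'T : T'.toLinearMap.comp T.toLinearMap = LinearMap.id := by
    apply LinearMap.ext
    intro y
    simpa using DFunLike.congr_fun hPSS.2.2 y
  set EL : En n ≃ₗ[ℝ] En n := LinearEquiv.ofLinear T.toLinearMap T'.toLinearMap hTT' hT'T
    with hELdef
  set h : AffG n := EL.toAffineEquiv.trans (AffineEquiv.constVAdd ℝ (En n) b) with hhdef
  have hhy : ∀ y : En n, h y = T y + b := by
    intro y
    rw [hhdef]
    simp [AffineEquiv.trans_apply, hELdef, add_comm]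
  -- the images converge to h • K
  have hwh : Tendsto (fun j => w j • K) atTop (nhds (h • K)) := by
    rw [tendsto_iff_dist_tendsto_zero]
    have hbd : ∀ j, dist (w j • K) (h • K) ≤ ‖Lm (w j) - T‖ * S + ‖w j 0 - b‖ := by
      intro j
      apply kdist_smul_le _ _ _ (by positivity)
      intro y hy
      have hyS : ‖y‖ ≤ S := by
        have := hKS hy; rwa [Metric.mem_closedBall, dist_zero_right] at this
      rw [dist_eq_norm, aff_apply (w j) y, hhy y]
      have e : Lm (w j) y + w j 0 - (T y + b) = (Lm (w j) - T) y + (w j 0 - b) := by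
        rw [ContinuousLinearMap.sub_apply]; abel
      rw [e]
      calc ‖(Lm (w j) - T) y + (w j 0 - b)‖ ≤ ‖(Lm (w j) - T) y‖ + ‖w j 0 - b‖ :=
            norm_add_le _ _
        _ ≤ ‖Lm (w j) - T‖ * S + ‖w j 0 - b‖ := by
            have := (Lm (w j) - T).le_opNorm y
            have h2 : ‖Lm (w j) - T‖ * ‖y‖ ≤ ‖Lm (w j) - T‖ * S :=
              mul_le_mul_of_nonneg_left hyS (norm_nonneg _)
            linarith
    have h1 : Tendsto (fun j => ‖Lm (w j) - T‖) atTop (nhds 0) :=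
      tendsto_iff_norm_sub_tendsto_zero.1 hT
    have h2 : Tendsto (fun j => ‖w j 0 - b‖) atTop (nhds 0) :=
      tendsto_iff_norm_sub_tendsto_zero.1 hb
    have h3 : Tendsto (fun j => ‖Lm (w j) - T‖ * S + ‖w j 0 - b‖) atTop (nhds 0) := by
      have := (h1.mul_const S).add h2
      simpa using this
    exact squeeze_zero (fun j => dist_nonneg) hbd h3
  -- but they also converge to g₀ • K
  have hwg : Tendsto (fun j => w j • K) atTop (nhds (g₀ • K)) := by
    have hsub : Tendsto (fun j => ns (φ j + M)) atTop atTop :=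
      hns.comp (tendsto_atTop_mono (fun j => Nat.le_add_right (φ j) M) hφ.tendsto_atTop)
    exact hv.comp hsub
  have hKeq : h • K = g₀ • K := tendsto_nhds_unique hwh hwg
  have hfix : (g₀⁻¹ * h) • K = K := by rw [mul_smul, hKeq, inv_smul_smul]
  have hpt : h x = g₀ x := by
    have h1 : g₀⁻¹ (h x) = x := by
      have := hx _ hfix
      rwa [AffineEquiv.mul_def, AffineEquiv.trans_apply] at this
    calc h x = (g₀ * g₀⁻¹) (h x) := by rw [mul_inv_cancel]; simp [AffineEquiv.one_def]
      _ = g₀ (g₀⁻¹ (h x)) := by rw [AffineEquiv.mul_def, AffineEquiv.trans_apply]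
      _ = g₀ x := by rw [h1]
  -- conclude
  have happ : Tendsto (fun j => w j x) atTop (nhds (T x + b)) := by
    have hev : Tendsto (fun j => Lm (w j) x) atTop (nhds (T x)) :=
      (isBoundedBilinearMap_apply.continuous.tendsto (T, x)).comp
        (hT.prodMk_nhds tendsto_const_nhds)
    have := hev.add hb
    simpa only [← aff_apply] using this
  show Tendsto (fun j => w j x) atTop (nhds (g₀ x))
  rw [← hpt, hhy x]
  exact happ

end Helpers

set_option maxHeartbeats 1000000 in
set_option synthInstance.maxHeartbeats 400000 in
/-- For `x ∈ F_n(K)`, the assignment `gK ↦ gx` gives a well-defined, continuous,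
equivariant map on the orbit of `K`. -/
theorem orbit_map_exists {n : ℕ} (K : KBody n) (x : En n)
    (hx : ∀ g : AffG n, g • K = K → g x = x) :
    ∃ f : KBody n → En n,
      ContinuousOn f (MulAction.orbit (AffG n) K) ∧
      (∀ g : AffG n, f (g • K) = g x) ∧
      (∀ (g : AffG n), ∀ A ∈ MulAction.orbit (AffG n) K, f (g • A) = g (f A)) := by
  classical
  set f : KBody n → En n :=
    fun A => if hA : ∃ g : AffG n, g • K = A then hA.choose x else x with hfdef
  have hwd : ∀ (A : KBody n) (g : AffG n), g • K = A → f A = g x := by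
    intro A g hg
    have hA : ∃ g' : AffG n, g' • K = A := ⟨g, hg⟩
    have hch : hA.choose • K = A := hA.choose_spec
    have hfix : (g⁻¹ * hA.choose) • K = K := by
      rw [mul_smul, hch, ← hg, inv_smul_smul]
    have h1 := hx _ hfix
    rw [AffineEquiv.mul_def, AffineEquiv.trans_apply] at h1
    have h2 : hA.choose x = g x := by
      calc hA.choose x = g (g⁻¹ (hA.choose x)) := by
            rw [AffineEquiv.inv_def, AffineEquiv.apply_symm_apply]
        _ = g x := by
            rw [show (g⁻¹ : AffG n) (hA.choose x) = x from h1]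
    rw [hfdef]
    simp only [dif_pos hA]
    exact h2
  refine ⟨f, ?_, ?_, ?_⟩
  · -- continuity on the orbit
    intro A₀ hA₀
    obtain ⟨g₀, hg₀'⟩ := hA₀
    have hg₀ : g₀ • K = A₀ := hg₀'
    have hfA₀ : f A₀ = g₀ x := hwd _ _ hg₀
    show Filter.Tendsto f (nhdsWithin A₀ (MulAction.orbit (AffG n) K)) (nhds (f A₀))
    rw [hfA₀]
    apply Filter.tendsto_iff_seq_tendsto.2
    intro u hu
    rw [tendsto_nhdsWithin_iff] at hu
    obtain ⟨hu1, hu2⟩ := hu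
    set v : ℕ → AffG n :=
      fun i => if h : ∃ g : AffG n, g • K = u i then h.choose else 1 with hvdef
    have hv1 : ∀ᶠ i in Filter.atTop, v i • K = u i := by
      filter_upwards [hu2] with i hi
      obtain ⟨g, hg⟩ := hi
      have hex : ∃ g' : AffG n, g' • K = u i := ⟨g, hg⟩
      rw [hvdef]
      simp only [dif_pos hex]
      exact hex.choose_spec
    have hv2 : Filter.Tendsto (fun i => v i • K) Filter.atTop (nhds (g₀ • K)) := by
      rw [hg₀]
      exact hu1.congr' (hv1.mono fun i hi => hi.symm)
    have hv3 := key_tendsto K x hx g₀ v hv2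
    apply hv3.congr'
    filter_upwards [hv1] with i hi
    exact (hwd (u i) (v i) hi).symm
  · intro g
    exact hwd _ g rfl
  · intro g A hA
    obtain ⟨a, ha'⟩ := hA
    have ha : a • K = A := ha'
    have h1 : (g * a) • K = g • A := by rw [mul_smul, ha]
    rw [hwd _ _ h1, hwd A a ha]
    rw [AffineEquiv.mul_def, AffineEquiv.trans_apply]

end
end

section
/- If a locally compact group G acts properly (in the sense of Palais) on a Tychonoff space X, then the orbit space X/G is Tychonoff (completely regular Hausdorff). -/
open Set Pointwise

open Pointwise in
/-- A subset `S` of a `G`-space is small (Palais) if every point has a neighborhood `V`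
such that `{g | gS ∩ V ≠ ∅}` has compact closure in `G`. -/
def SmallSet (G : Type*) {X : Type*} [Group G] [MulAction G X]
    [TopologicalSpace G] [TopologicalSpace X] (S : Set X) : Prop :=
  ∀ x : X, ∃ V ∈ nhds x, IsCompact (closure {g : G | ((g • S) ∩ V).Nonempty})

/-- A `G`-space is proper in the sense of Palais if it has an open cover by small sets. -/
def PalaisProper (G X : Type*) [Group G] [MulAction G X]
    [TopologicalSpace G] [TopologicalSpace X] : Prop :=
  ∀ x : X, ∃ S : Set X, IsOpen S ∧ x ∈ S ∧ SmallSet G S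


open MulAction in
/-- Orbits of a Palais-proper action on a Hausdorff space are closed. -/
theorem PalaisProper.isClosed_orbit {G X : Type*} [Group G]
    [TopologicalSpace G] [IsTopologicalGroup G] [TopologicalSpace X] [T2Space X]
    [MulAction G X] [ContinuousSMul G X]
    (h : PalaisProper G X) (x : X) : IsClosed (MulAction.orbit G x) := by
  rw [← closure_subset_iff_isClosed]
  intro y hy
  obtain ⟨S, hSopen, hyS, hSsmall⟩ := h y
  obtain ⟨V, hV, hK⟩ := hSsmall x
  set K := closure {g : G | ((g • S) ∩ V).Nonempty} with hKdef
  have hφ : Continuous fun g : G => g • x := continuous_id.smul continuous_const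
  have himg : IsCompact ((fun g : G => g • x) '' K⁻¹) := (hK.inv).image hφ
  have hsub : MulAction.orbit G x ∩ S ⊆ (fun g : G => g • x) '' K⁻¹ := by
    rintro z ⟨⟨g, rfl⟩, hzS⟩
    refine ⟨g, ?_, rfl⟩
    rw [Set.mem_inv]
    apply subset_closure
    exact ⟨x, ⟨g • x, hzS, by simp⟩, mem_of_mem_nhds hV⟩
  have hy2 : y ∈ closure (MulAction.orbit G x ∩ S) := by
    have := hSopen.inter_closure (t := MulAction.orbit G x) ⟨hyS, hy⟩
    rwa [Set.inter_comm] at this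
  have : y ∈ (fun g : G => g • x) '' K⁻¹ :=
    himg.isClosed.closure_subset ((closure_mono hsub) hy2)
  obtain ⟨g, -, rfl⟩ := this
  exact ⟨g, rfl⟩

/-- For a proper (in the sense of Palais) action of a locally compact group on a
Tychonoff space, the orbit space is Tychonoff. -/
theorem palais_proper_orbit_space_tychonoff {G X : Type*} [Group G]
    [TopologicalSpace G] [IsTopologicalGroup G] [LocallyCompactSpace G]
    [TopologicalSpace X] [T35Space X] [MulAction G X] [ContinuousSMul G X]
    (h : PalaisProper G X) :
    T35Space (Quotient (MulAction.orbitRel G X)) := by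
  set π : X → Quotient (MulAction.orbitRel G X) := Quotient.mk _ with hπdef
  have hqm : Topology.IsQuotientMap π := isQuotientMap_quot_mk
  have hπsound : ∀ (g : G) (y : X), π (g • y) = π y := fun g y => Quotient.sound ⟨g, rfl⟩
  -- T1
  have ht1 : T1Space (Quotient (MulAction.orbitRel G X)) := by
    refine ⟨fun q => ?_⟩
    induction q using Quotient.inductionOn with
    | h x =>
      rw [← hqm.isClosed_preimage]
      have : π ⁻¹' {Quotient.mk _ x} = MulAction.orbit G x := by
        ext z
        simp only [Set.mem_preimage, Set.mem_singleton_iff]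
        constructor
        · intro hz
          exact Quotient.exact hz
        · intro hz
          exact Quotient.sound hz
      rw [this]
      exact h.isClosed_orbit x
  -- Completely regular
  have hcr : CompletelyRegularSpace (Quotient (MulAction.orbitRel G X)) := by
    constructor
    intro q C hC hqC
    induction q using Quotient.inductionOn with
    | h x₀ =>
    set A : Set X := π ⁻¹' C with hAdef
    have hAclosed : IsClosed A := hC.preimage hqm.continuous
    have hAsat : ∀ y ∈ A, ∀ g : G, g • y ∈ A := fun y hy g => by
      show π (g • y) ∈ C; rw [hπsound]; exact hy
    have hx₀A : x₀ ∉ A := hqC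
    obtain ⟨S, hSopen, hx₀S, hSsmall⟩ := h x₀
    -- separate x₀ from A ∪ Sᶜ in X
    obtain ⟨f, hfc, hfx₀, hf1⟩ := CompletelyRegularSpace.completely_regular x₀ (A ∪ Sᶜ)
      (hAclosed.union hSopen.isClosed_compl) (by simp [hx₀A, hx₀S])
    set u : X → ℝ := fun z => 1 - (f z : ℝ) with hudef
    have huc : Continuous u := continuous_const.sub (continuous_subtype_val.comp hfc)
    have hu0 : ∀ z, 0 ≤ u z := fun z => by
      have := (f z).2.2; simp only [hudef]; linarith
    have hu1 : ∀ z, u z ≤ 1 := fun z => by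
      have := (f z).2.1; simp only [hudef]; linarith
    have huA : ∀ z ∈ A ∪ Sᶜ, u z = 0 := fun z hz => by
      have : f z = 1 := hf1 hz
      simp [hudef, this]
    have hux₀ : u x₀ = 1 := by simp [hudef, hfx₀]
    -- the invariant function
    set F : X → ℝ := fun z => sSup (Set.range fun g : G => u (g • z)) with hFdef
    have hbdd : ∀ z : X, BddAbove (Set.range fun g : G => u (g • z)) :=
      fun z => ⟨1, by rintro a ⟨g, rfl⟩; exact hu1 _⟩
    have hne : ∀ z : X, (Set.range fun g : G => u (g • z)).Nonempty :=
      fun z => ⟨u ((1 : G) • z), ⟨1, rfl⟩⟩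
    have hF0 : ∀ z, 0 ≤ F z := fun z => by
      refine le_csSup (hbdd z) ⟨1, ?_⟩ |>.trans' (hu0 ((1 : G) • z))
      rfl
    have hFx₀ : F x₀ = 1 := by
      refine le_antisymm (csSup_le (hne x₀) ?_) (le_csSup (hbdd x₀) ⟨1, ?_⟩)
      · rintro a ⟨g, rfl⟩; exact hu1 _
      · simp [hux₀]
    have hFA : ∀ y ∈ A, F y = 0 := by
      intro y hy
      have : (Set.range fun g : G => u (g • y)) = {0} := by
        apply Set.eq_singleton_iff_nonempty_unique_mem.mpr
        refine ⟨hne y, ?_⟩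
        rintro a ⟨g, rfl⟩
        exact huA _ (Or.inl (hAsat y hy g))
      rw [hFdef]; simp only; rw [this, csSup_singleton]
    have hFinv : ∀ (g : G) (y : X), F (g • y) = F y := by
      intro g y
      have : (Set.range fun g' : G => u (g' • (g • y))) = Set.range fun g' : G => u (g' • y) := by
        ext a
        constructor
        · rintro ⟨g', rfl⟩; exact ⟨g' * g, by simp [mul_smul]⟩
        · rintro ⟨g', rfl⟩; exact ⟨g' * g⁻¹, by simp [mul_smul]⟩
      rw [hFdef]; simp only; rw [this]
    -- continuity of F
    have hFcont : Continuous F := by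
      rw [continuous_iff_continuousAt]
      intro y
      obtain ⟨V, hV, hKV⟩ := hSsmall y
      set K' : Set G := (closure {g : G | ((g • S) ∩ V).Nonempty})⁻¹ ∪ {1} with hK'def
      have hK'cpt : IsCompact K' := hKV.inv.union isCompact_singleton
      have h1K' : (1 : G) ∈ K' := Or.inr rfl
      have hGc : Continuous fun z : X => sSup ((fun g : G => u (g • z)) '' K') := by
        apply hK'cpt.continuous_sSup
        exact huc.comp (continuous_snd.smul continuous_fst)
      have heq : ∀ z ∈ V, F z = sSup ((fun g : G => u (g • z)) '' K') := by
        intro z hzV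
        have hbddi : BddAbove ((fun g : G => u (g • z)) '' K') :=
          ((hbdd z).mono (Set.image_subset_range _ _))
        have hnei : ((fun g : G => u (g • z)) '' K').Nonempty := ⟨_, 1, h1K', rfl⟩
        refine le_antisymm (csSup_le (hne z) ?_) (csSup_le hnei ?_)
        · rintro a ⟨g, rfl⟩
          by_cases hgS : g • z ∈ S
          · have hginv : g ∈ K' := by
              left
              rw [Set.mem_inv]
              apply subset_closure
              exact ⟨z, ⟨g • z, hgS, by simp⟩, hzV⟩
            exact le_csSup hbddi ⟨g, hginv, rfl⟩
          · have h0 : u (g • z) = 0 := huA _ (Or.inr hgS)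
            show u (g • z) ≤ _
            rw [h0]
            exact (hu0 ((1 : G) • z)).trans (le_csSup hbddi ⟨1, h1K', rfl⟩)
        · rintro a ⟨g, -, rfl⟩
          exact le_csSup (hbdd z) ⟨g, rfl⟩
      have hev : F =ᶠ[nhds y] fun z => sSup ((fun g : G => u (g • z)) '' K') :=
        Filter.eventuallyEq_of_mem hV heq
      exact (hGc.continuousAt).congr hev.symm
    -- descend to the quotient
    set Fbar : Quotient (MulAction.orbitRel G X) → ℝ :=
      Quotient.lift F (fun a b hab => by
        obtain ⟨g, rfl⟩ := hab
        exact hFinv g b) with hFbardef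
    have hFbarc : Continuous Fbar := hqm.continuous_iff.mpr hFcont
    refine ⟨fun p => Set.projIcc (0 : ℝ) 1 zero_le_one (1 - Fbar p),
      continuous_projIcc.comp (continuous_const.sub hFbarc), ?_, ?_⟩
    · show Set.projIcc (0 : ℝ) 1 zero_le_one (1 - Fbar (π x₀)) = 0
      have : Fbar (π x₀) = 1 := hFx₀
      rw [this]
      norm_num
    · intro c hc
      induction c using Quotient.inductionOn with
      | h y =>
      have hyA : y ∈ A := hc
      show Set.projIcc (0 : ℝ) 1 zero_le_one (1 - Fbar (π y)) = 1
      have : Fbar (π y) = 0 := hFA y hyA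
      rw [this]
      norm_num
  exact { toT0Space := ht1.t0Space, toCompletelyRegularSpace := hcr }
end
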